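/- Let n be a natural number and let S, T be subspaces of ℂⁿ. Then dim P(S,T) = dim P(T,S), i.e., finrank ℂ ((S ⊔ Tᗮ) ⊓ T) = finrank ℂ ((T ⊔ Sᗮ) ⊓ S). -/

import Mathlib

/-- `dim P(S,T) = dim P(T,S)` where `P(S,T) = (S ⊔ Tᗮ) ⊓ T`. -/
theorem stmt_1 (n : ℕ) (S T : Submodule ℂ (EuclideanSpace ℂ (Fin n))) :
    Module.finrank ℂ ((S ⊔ Tᗮ) ⊓ T : Submodule ℂ (EuclideanSpace ℂ (Fin n))) =
      Module.finrank ℂ ((T ⊔ Sᗮ) ⊓ S : Submodule ℂ (EuclideanSpace ℂ (Fin n))) := by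
  have hE : Module.finrank ℂ (EuclideanSpace ℂ (Fin n)) = n := finrank_euclideanSpace_fin
  have htopT : (S ⊔ Tᗮ) ⊔ T = ⊤ := by
    rw [sup_assoc, sup_comm Tᗮ T, Submodule.sup_orthogonal_of_hasOrthogonalProjection, sup_top_eq]
  have htopS : (T ⊔ Sᗮ) ⊔ S = ⊤ := by
    rw [sup_assoc, sup_comm Sᗮ S, Submodule.sup_orthogonal_of_hasOrthogonalProjection, sup_top_eq]
  have h1 := Submodule.finrank_sup_add_finrank_inf_eq (S ⊔ Tᗮ) T
  rw [htopT, finrank_top, hE] at h1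
  have g1 := Submodule.finrank_sup_add_finrank_inf_eq (T ⊔ Sᗮ) S
  rw [htopS, finrank_top, hE] at g1
  have h2 := Submodule.finrank_sup_add_finrank_inf_eq S Tᗮ
  have g2 := Submodule.finrank_sup_add_finrank_inf_eq T Sᗮ
  have h3 : Module.finrank ℂ T + Module.finrank ℂ Tᗮ = n := by
    rw [Submodule.finrank_add_finrank_orthogonal, hE]
  have h4 : Module.finrank ℂ S + Module.finrank ℂ Sᗮ = n := by
    rw [Submodule.finrank_add_finrank_orthogonal, hE]
  have h5 : S ⊓ Tᗮ = (Sᗮ ⊔ T)ᗮ := by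
    rw [← Submodule.inf_orthogonal, Submodule.orthogonal_orthogonal]
  have h5' : Module.finrank ℂ (Sᗮ ⊔ T : Submodule ℂ (EuclideanSpace ℂ (Fin n)))
      + Module.finrank ℂ (S ⊓ Tᗮ : Submodule ℂ (EuclideanSpace ℂ (Fin n))) = n := by
    rw [h5, Submodule.finrank_add_finrank_orthogonal, hE]
  have h6 := Submodule.finrank_sup_add_finrank_inf_eq Sᗮ T
  have g5 : T ⊓ Sᗮ = Sᗮ ⊓ T := inf_comm Sᗮ T |>.symm
  rw [g5] at g2
  omega
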